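/- Suppose there exist actions a₁, a₂ ∈ A and reals α ≤ β (or β ≤ α) with μ(U(a₁,b)) ≤ α and μ(U(a₂,b)) ≥ β for all b ∈ B, and suppose the payoff-based strategy Q satisfies Q_u(a₁) = 1 whenever μ(u) > α and Q_u(a₂) = 1 whenever μ(u) < β. Then for every u ∈ E with μ(u) > α, every v ∈ C(u) satisfies μ(v) ≤ α; and for every u with μ(u) < β, every v ∈ C(u) satisfies μ(v) ≥ β. Hence Λ = {u ∈ E : μ(u) ∈ [min(α,β), max(α,β)]} satisfies the Blackwell separation condition (is a B-set). -/

import Mathlib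

open RealInnerProductSpace

lemma seg_aux {V : Type*} [NormedAddCommGroup V] [InnerProductSpace ℝ V]
    (μ x p : V) (c : ℝ) (hx : c < ⟪μ, x⟫) (hp : ⟪μ, p⟫ ≤ c) :
    ∃ lam : ℝ, 0 < lam ∧ lam ≤ 1 ∧ ⟪μ, lam • p + (1 - lam) • x⟫ = c := by
  refine ⟨(⟪μ, x⟫ - c) / (⟪μ, x⟫ - ⟪μ, p⟫), ?_, ?_, ?_⟩
  · exact div_pos (by linarith) (by linarith)
  · rw [div_le_one (by linarith)]; linarith
  · rw [inner_add_right, real_inner_smul_right, real_inner_smul_right]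
    have hd : ⟪μ, x⟫ - ⟪μ, p⟫ ≠ 0 := by linarith
    field_simp
    ring

lemma bound_aux {N : ℕ} {A B : Type*} [Fintype A] [DecidableEq A] [Fintype B]
    (U : A → B → EuclideanSpace ℝ (Fin N)) (μ : EuclideanSpace ℝ (Fin N))
    (a₀ : A) (α : ℝ) (h : ∀ b, ⟪μ, U a₀ b⟫ ≤ α)
    (Q : A → ℝ) (hQ0 : ∀ a, 0 ≤ Q a) (hQs : ∑ a, Q a = 1) (hQ1 : Q a₀ = 1)
    (ν : B → ℝ) (hν0 : ∀ b, 0 ≤ ν b) (hνs : ∑ b, ν b = 1) :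
    ⟪μ, ∑ a, ∑ b, (Q a * ν b) • U a b⟫ ≤ α := by
  have hz : ∀ a, a ≠ a₀ → Q a = 0 := by
    have he : ∑ a ∈ Finset.univ.erase a₀, Q a = 0 := by
      have := Finset.add_sum_erase Finset.univ Q (Finset.mem_univ a₀)
      linarith
    intro a ha
    exact (Finset.sum_eq_zero_iff_of_nonneg (fun a _ => hQ0 a)).1 he a
      (Finset.mem_erase.2 ⟨ha, Finset.mem_univ a⟩)
  rw [inner_sum]
  simp_rw [inner_sum, real_inner_smul_right]
  calc ∑ a, ∑ b, Q a * ν b * ⟪μ, U a b⟫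
      ≤ ∑ a, ∑ b, Q a * ν b * α := by
        refine Finset.sum_le_sum fun a _ => Finset.sum_le_sum fun b _ => ?_
        by_cases ha : a = a₀
        · subst ha
          exact mul_le_mul_of_nonneg_left (h b) (mul_nonneg (hQ0 a) (hν0 b))
        · simp [hz a ha]
    _ = α := by
        simp_rw [mul_assoc, ← Finset.mul_sum, ← Finset.sum_mul, hνs, hQs]
        simp

lemma memE_aux {N : ℕ} {A B : Type*} [Fintype A] [Fintype B]
    (U : A → B → EuclideanSpace ℝ (Fin N))
    (Q : A → ℝ) (hQ0 : ∀ a, 0 ≤ Q a) (hQs : ∑ a, Q a = 1)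
    (ν : B → ℝ) (hν0 : ∀ b, 0 ≤ ν b) (hνs : ∑ b, ν b = 1) :
    (∑ a, ∑ b, (Q a * ν b) • U a b) ∈
      convexHull ℝ {x : EuclideanSpace ℝ (Fin N) | ∃ a b, x = U a b} := by
  have hrw : (∑ a, ∑ b, (Q a * ν b) • U a b)
      = ∑ p : A × B, (Q p.1 * ν p.2) • U p.1 p.2 := by
    rw [Fintype.sum_prod_type]
  rw [hrw]
  refine (convex_convexHull ℝ _).sum_mem
    (fun p _ => mul_nonneg (hQ0 p.1) (hν0 p.2)) ?_ (fun p _ => ?_)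
  · rw [Fintype.sum_prod_type]
    simp_rw [← Finset.mul_sum, hνs, mul_one]
    exact hQs
  · exact subset_convexHull ℝ _ ⟨p.1, p.2, rfl⟩

lemma proj_aux {N : ℕ} (E Λ : Set (EuclideanSpace ℝ (Fin N)))
    (hEconv : Convex ℝ E) (μ : EuclideanSpace ℝ (Fin N)) (c lo hi : ℝ)
    (hΛ : Λ = {u ∈ E | lo ≤ ⟪μ, u⟫ ∧ ⟪μ, u⟫ ≤ hi})
    (hΛconv : Convex ℝ Λ) (hΛclosed : IsClosed Λ)
    (hlo : lo ≤ c) (hhi : c ≤ hi)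
    (x : EuclideanSpace ℝ (Fin N)) (hx : x ∈ E) (hxc : c < ⟪μ, x⟫)
    (p : EuclideanSpace ℝ (Fin N)) (hp : p ∈ E) (hpc : ⟪μ, p⟫ ≤ c)
    (V : Set (EuclideanSpace ℝ (Fin N)))
    (hV : ∀ v ∈ V, v ∈ E ∧ ⟪μ, v⟫ ≤ c) :
    ∃ y ∈ Λ, (∀ z ∈ Λ, dist x y ≤ dist x z) ∧ ∀ v ∈ V, ⟪x - y, v - y⟫ ≤ 0 := by
  -- Λ is nonempty
  obtain ⟨lam, hl0, hl1, hlc⟩ := seg_aux μ x p c hxc hpc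
  have hz₀E : lam • p + (1 - lam) • x ∈ E :=
    hEconv hp hx hl0.le (by linarith) (by ring)
  have hz₀ : lam • p + (1 - lam) • x ∈ Λ := by
    rw [hΛ]; exact ⟨hz₀E, by rw [hlc]; exact hlo, by rw [hlc]; exact hhi⟩
  obtain ⟨y, hyΛ, hy⟩ := exists_norm_eq_iInf_of_complete_convex
    ⟨_, hz₀⟩ hΛclosed.isComplete hΛconv x
  have hvar : ∀ w ∈ Λ, ⟪x - y, w - y⟫ ≤ 0 :=
    (norm_eq_iInf_iff_real_inner_le_zero hΛconv hyΛ).1 hy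
  refine ⟨y, hyΛ, ?_, ?_⟩
  · intro z hz
    rw [dist_eq_norm, dist_eq_norm, hy]
    exact ciInf_le ⟨0, by rintro _ ⟨w, rfl⟩; exact norm_nonneg _⟩ (⟨z, hz⟩ : Λ)
  · intro v hv
    obtain ⟨hvE, hvc⟩ := hV v hv
    obtain ⟨t, ht0, ht1, htc⟩ := seg_aux μ x v c hxc hvc
    have hzE : t • v + (1 - t) • x ∈ E := hEconv hvE hx ht0.le (by linarith) (by ring)
    have hzΛ : t • v + (1 - t) • x ∈ Λ := by
      rw [hΛ]; exact ⟨hzE, by rw [htc]; exact hlo, by rw [htc]; exact hhi⟩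
    have h1 := hvar _ hzΛ
    have hdec : (t • v + (1 - t) • x) - y = t • (v - y) + (1 - t) • (x - y) := by
      module
    rw [hdec, inner_add_right, real_inner_smul_right, real_inner_smul_right] at h1
    nlinarith [real_inner_self_nonneg (x := x - y)]

/-- Blackwell's corollary: if action `a₁` guarantees `μ(U(a₁,b)) ≤ α`, action `a₂`
guarantees `μ(U(a₂,b)) ≥ β`, and the payoff-based strategy `Q` plays `a₁` whenever
`μ(u) > α` and `a₂` whenever `μ(u) < β`, then `C(u)` lies in the appropriate half
space, and `Λ = {u ∈ E : μ(u) ∈ [min(α,β), max(α,β)]}` satisfies Blackwell's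
separation condition (is a `B`-set). -/
theorem blackwell_corollary (N : ℕ) (A B : Type*) [Fintype A] [Fintype B]
    (U : A → B → EuclideanSpace ℝ (Fin N))
    (E : Set (EuclideanSpace ℝ (Fin N)))
    (hE : E = convexHull ℝ {x | ∃ a b, x = U a b})
    (μ : EuclideanSpace ℝ (Fin N)) (hμ : μ ≠ 0)
    (a₁ a₂ : A) (α β : ℝ)
    (ha₁ : ∀ b, ⟪μ, U a₁ b⟫ ≤ α) (ha₂ : ∀ b, β ≤ ⟪μ, U a₂ b⟫)
    (Q : EuclideanSpace ℝ (Fin N) → A → ℝ)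
    (hQnonneg : ∀ u a, 0 ≤ Q u a) (hQsum : ∀ u, ∑ a, Q u a = 1)
    (hQ1 : ∀ u, α < ⟪μ, u⟫ → Q u a₁ = 1)
    (hQ2 : ∀ u, ⟪μ, u⟫ < β → Q u a₂ = 1)
    (C : EuclideanSpace ℝ (Fin N) → Set (EuclideanSpace ℝ (Fin N)))
    (hC : ∀ u, C u = {v | ∃ ν : B → ℝ, (∀ b, 0 ≤ ν b) ∧ (∑ b, ν b = 1) ∧
      v = ∑ a, ∑ b, (Q u a * ν b) • U a b})
    (Λ : Set (EuclideanSpace ℝ (Fin N)))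
    (hΛ : Λ = {u ∈ E | min α β ≤ ⟪μ, u⟫ ∧ ⟪μ, u⟫ ≤ max α β}) :
    (∀ u ∈ E, α < ⟪μ, u⟫ → ∀ v ∈ C u, ⟪μ, v⟫ ≤ α) ∧
    (∀ u ∈ E, ⟪μ, u⟫ < β → ∀ v ∈ C u, β ≤ ⟪μ, v⟫) ∧
    (∀ x ∈ E, x ∉ Λ → ∃ y ∈ Λ, (∀ z ∈ Λ, dist x y ≤ dist x z) ∧
      ∀ v ∈ C x, ⟪x - y, v - y⟫ ≤ 0) := by
  classical
  -- Part 1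
  have part1 : ∀ u, α < ⟪μ, u⟫ → ∀ v ∈ C u, ⟪μ, v⟫ ≤ α := by
    intro u hu v hv
    rw [hC u] at hv
    obtain ⟨ν, hν0, hνs, rfl⟩ := hv
    exact bound_aux U μ a₁ α ha₁ (Q u) (hQnonneg u) (hQsum u) (hQ1 u hu) ν hν0 hνs
  -- Part 2
  have part2 : ∀ u, ⟪μ, u⟫ < β → ∀ v ∈ C u, β ≤ ⟪μ, v⟫ := by
    intro u hu v hv
    rw [hC u] at hv
    obtain ⟨ν, hν0, hνs, rfl⟩ := hv
    have := bound_aux U (-μ) a₂ (-β)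
      (fun b => by rw [inner_neg_left]; linarith [ha₂ b])
      (Q u) (hQnonneg u) (hQsum u) (hQ2 u hu) ν hν0 hνs
    rw [inner_neg_left] at this
    linarith
  -- Membership of C u in E
  have hmemE : ∀ u, ∀ v ∈ C u, v ∈ E := by
    intro u v hv
    rw [hC u] at hv
    obtain ⟨ν, hν0, hνs, rfl⟩ := hv
    rw [hE]
    exact memE_aux U (Q u) (hQnonneg u) (hQsum u) ν hν0 hνs
  refine ⟨fun u _ => part1 u, fun u _ => part2 u, ?_⟩
  -- Part 3
  have hEconv : Convex ℝ E := hE ▸ convex_convexHull ℝ _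
  have hSfin : Set.Finite {x : EuclideanSpace ℝ (Fin N) | ∃ a b, x = U a b} := by
    have : {x : EuclideanSpace ℝ (Fin N) | ∃ a b, x = U a b}
        = Set.range (fun p : A × B => U p.1 p.2) := by
      ext z; constructor
      · rintro ⟨a, b, rfl⟩; exact ⟨(a, b), rfl⟩
      · rintro ⟨⟨a, b⟩, rfl⟩; exact ⟨a, b, rfl⟩
    rw [this]
    exact Set.finite_range _
  have hEcomp : IsCompact E := hE ▸ hSfin.isCompact_convexHull (𝕜 := ℝ)
  have hcont : Continuous fun u : EuclideanSpace ℝ (Fin N) => ⟪μ, u⟫ :=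
    continuous_const.inner continuous_id
  have hlin : IsLinearMap ℝ fun u : EuclideanSpace ℝ (Fin N) => ⟪μ, u⟫ :=
    ⟨fun x y => inner_add_right μ x y, fun c x => real_inner_smul_right μ x c⟩
  have hΛconv : Convex ℝ Λ := by
    have : Λ = E ∩ ({u | min α β ≤ ⟪μ, u⟫} ∩ {u | ⟪μ, u⟫ ≤ max α β}) := by
      rw [hΛ]; ext u; simp only [Set.mem_inter_iff, Set.mem_setOf_eq]
    rw [this]
    exact hEconv.inter ((convex_halfSpace_ge hlin _).inter (convex_halfSpace_le hlin _))
  have hΛclosed : IsClosed Λ := by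
    have : Λ = E ∩ ({u | min α β ≤ ⟪μ, u⟫} ∩ {u | ⟪μ, u⟫ ≤ max α β}) := by
      rw [hΛ]; ext u; simp only [Set.mem_inter_iff, Set.mem_setOf_eq]
    rw [this]
    exact hEcomp.isClosed.inter
      ((isClosed_le continuous_const hcont).inter (isClosed_le hcont continuous_const))
  intro x hxE hxΛ
  -- B is nonempty since E is nonempty
  obtain ⟨a', b₀, -⟩ : ∃ (a : A) (b : B), True := by
    by_contra hcon
    push_neg at hcon
    have hSempty : {x : EuclideanSpace ℝ (Fin N) | ∃ a b, x = U a b} = ∅ := by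
      ext z; simp only [Set.mem_setOf_eq, Set.mem_empty_iff_false, iff_false]
      rintro ⟨a, b, -⟩; exact hcon a b
    rw [hE, hSempty, convexHull_empty] at hxE
    exact hxE
  have hxnot : ⟪μ, x⟫ < min α β ∨ max α β < ⟪μ, x⟫ := by
    rw [hΛ] at hxΛ
    by_contra hcon
    push_neg at hcon
    exact hxΛ ⟨hxE, hcon.1, hcon.2⟩
  rcases hxnot with hcase | hcase
  · -- ⟪μ,x⟫ < min α β, use a₂ and -μ
    have hΛ' : Λ = {u ∈ E | -(max α β) ≤ ⟪-μ, u⟫ ∧ ⟪-μ, u⟫ ≤ -(min α β)} := by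
      rw [hΛ]; ext u; simp only [Set.mem_setOf_eq, inner_neg_left]
      constructor
      · rintro ⟨h1, h2, h3⟩; exact ⟨h1, by linarith, by linarith⟩
      · rintro ⟨h1, h2, h3⟩; exact ⟨h1, by linarith, by linarith⟩
    have hβmin : min α β ≤ β := min_le_right α β
    refine proj_aux E Λ hEconv (-μ) (-(min α β)) (-(max α β)) (-(min α β)) hΛ'
      hΛconv hΛclosed (by simp [min_le_max]) le_rfl x hxE
      (by rw [inner_neg_left]; linarith) (U a₂ b₀) ?_
      (by rw [inner_neg_left]; linarith [ha₂ b₀]) (C x) ?_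
    · rw [hE]; exact subset_convexHull ℝ _ ⟨a₂, b₀, rfl⟩
    · intro v hv
      refine ⟨hmemE x v hv, ?_⟩
      have := part2 x (by linarith) v hv
      rw [inner_neg_left]; linarith
  · -- max α β < ⟪μ,x⟫, use a₁
    have hαmax : α ≤ max α β := le_max_left α β
    refine proj_aux E Λ hEconv μ (max α β) (min α β) (max α β) hΛ
      hΛconv hΛclosed min_le_max le_rfl x hxE hcase (U a₁ b₀) ?_
      (by linarith [ha₁ b₀]) (C x) ?_
    · rw [hE]; exact subset_convexHull ℝ _ ⟨a₁, b₀, rfl⟩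
    · intro v hv
      exact ⟨hmemE x v hv, by linarith [part1 x (by linarith) v hv]⟩
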